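/- Let ν = (ν_{ij}) be an N×N matrix with nonnegative entries that is irreducible (for all i, j there exists k ≥ 1 with (ν^k)_{ij} > 0), and consider the modified iterative law P_{i,k+1} = A (∑_{j=1}^N l_{ij} P_{j,k}^{-1} + ν_{ij} C_jᵀ R_j^{-1} C_j)^{-1} Aᵀ + Q. Then for any positive definite initial matrices P_{1,0}, …, P_{N,0}, there exist a natural number k̄ and a positive definite n×n matrix P such that P_{i,k} ≤ P (in the Loewner order) for all i ∈ {1, …, N} and all k ≥ k̄. -/

import Mathlib

open Matrix
set_option linter.unusedSectionVars false
set_option maxHeartbeats 1000000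
namespace HCRE
variable {ι : Type*} [Fintype ι] [DecidableEq ι]

lemma quad_nonneg {M : Matrix ι ι ℝ} (h : M.PosSemidef) (x : ι → ℝ) :
    0 ≤ x ⬝ᵥ M *ᵥ x := by simpa using h.dotProduct_mulVec_nonneg x
lemma quad_pos {M : Matrix ι ι ℝ} (h : M.PosDef) {x : ι → ℝ} (hx : x ≠ 0) :
    0 < x ⬝ᵥ M *ᵥ x := by simpa using h.dotProduct_mulVec_pos hx
lemma psd_of_quad {M : Matrix ι ι ℝ} (h1 : M.IsHermitian)
    (h2 : ∀ x, 0 ≤ x ⬝ᵥ M *ᵥ x) : M.PosSemidef := .of_dotProduct_mulVec_nonneg h1 fun x => by simpa using h2 x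
lemma pd_of_quad {M : Matrix ι ι ℝ} (h1 : M.IsHermitian)
    (h2 : ∀ x, x ≠ 0 → 0 < x ⬝ᵥ M *ᵥ x) : M.PosDef := .of_dotProduct_mulVec_pos h1 fun x hx => by simpa using h2 x hx
lemma symm_of_herm {M : Matrix ι ι ℝ} (h : M.IsHermitian) : Mᵀ = M := by
  rw [← conjTranspose_eq_transpose_of_trivial]; exact h
lemma herm_of_symm {M : Matrix ι ι ℝ} (h : Mᵀ = M) : M.IsHermitian := by
  rwa [Matrix.IsHermitian, conjTranspose_eq_transpose_of_trivial]
lemma herm_smul {M : Matrix ι ι ℝ} (c : ℝ) (h : M.IsHermitian) : (c • M).IsHermitian := by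
  apply herm_of_symm; rw [Matrix.transpose_smul, symm_of_herm h]
lemma quad_dot_comm {M : Matrix ι ι ℝ} (h : M.IsHermitian) (x y : ι → ℝ) :
    x ⬝ᵥ M *ᵥ y = y ⬝ᵥ M *ᵥ x := by
  rw [dotProduct_mulVec x M y, dotProduct_comm]
  congr 1
  rw [← symm_of_herm h, vecMul_transpose, symm_of_herm h]
lemma quad_smul (c : ℝ) (M : Matrix ι ι ℝ) (x : ι → ℝ) :
    x ⬝ᵥ (c • M) *ᵥ x = c * (x ⬝ᵥ M *ᵥ x) := by
  rw [smul_mulVec, dotProduct_smul, smul_eq_mul]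
lemma quad_add (M N : Matrix ι ι ℝ) (x : ι → ℝ) :
    x ⬝ᵥ (M + N) *ᵥ x = x ⬝ᵥ M *ᵥ x + x ⬝ᵥ N *ᵥ x := by
  rw [add_mulVec, dotProduct_add]
lemma quad_sub (M N : Matrix ι ι ℝ) (x : ι → ℝ) :
    x ⬝ᵥ (M - N) *ᵥ x = x ⬝ᵥ M *ᵥ x - x ⬝ᵥ N *ᵥ x := by
  rw [sub_mulVec, dotProduct_sub]
lemma quad_sum {α : Type*} (s : Finset α) (f : α → Matrix ι ι ℝ) (x : ι → ℝ) :
    x ⬝ᵥ (∑ a ∈ s, f a) *ᵥ x = ∑ a ∈ s, x ⬝ᵥ f a *ᵥ x := by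
  classical
  induction s using Finset.induction_on with
  | empty => simp
  | insert _ _ h ih => rw [Finset.sum_insert h, Finset.sum_insert h, quad_add, ih]
lemma quad_conj (B M : Matrix ι ι ℝ) (x : ι → ℝ) :
    x ⬝ᵥ (Bᵀ * M * B) *ᵥ x = (B *ᵥ x) ⬝ᵥ M *ᵥ (B *ᵥ x) := by
  rw [Matrix.mul_assoc, ← mulVec_mulVec, ← mulVec_mulVec,
    dotProduct_mulVec x Bᵀ, vecMul_transpose]

/-- nonneg scalar multiple of PSD is PSD -/
lemma psd_smul {M : Matrix ι ι ℝ} (h : M.PosSemidef) {c : ℝ} (hc : 0 ≤ c) :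
    (c • M).PosSemidef := by
  refine psd_of_quad (herm_smul c h.1) fun x => ?_
  rw [quad_smul]; exact mul_nonneg hc (quad_nonneg h x)

lemma pd_smul {M : Matrix ι ι ℝ} (h : M.PosDef) {c : ℝ} (hc : 0 < c) :
    (c • M).PosDef := by
  refine pd_of_quad (herm_smul c h.1) fun x hx => ?_
  rw [quad_smul]; exact mul_pos hc (quad_pos h hx)

lemma psd_sum {α : Type*} (s : Finset α) (f : α → Matrix ι ι ℝ)
    (h : ∀ a ∈ s, (f a).PosSemidef) : (∑ a ∈ s, f a).PosSemidef := by
  classical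
  induction s using Finset.induction_on with
  | empty => simpa using Matrix.PosSemidef.zero
  | insert _ _ hns ih =>
    rw [Finset.sum_insert hns]
    exact (h _ (Finset.mem_insert_self _ _)).add
      (ih fun a ha => h a (Finset.mem_insert_of_mem ha))

/-- sum of PSD matrices with one PD member is PD -/
lemma pd_sum {α : Type*} (s : Finset α) (f : α → Matrix ι ι ℝ)
    (h : ∀ a ∈ s, (f a).PosSemidef) {a₀ : α} (ha₀ : a₀ ∈ s) (hpd : (f a₀).PosDef) :
    (∑ a ∈ s, f a).PosDef := by
  classical
  rw [← Finset.add_sum_erase s f ha₀]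
  exact hpd.add_posSemidef (psd_sum _ _ fun a ha => h a (Finset.mem_of_mem_erase ha))

/-- congruence preserving PD, invertible case -/
lemma pd_conj {M : Matrix ι ι ℝ} (h : M.PosDef) {B : Matrix ι ι ℝ} (hB : IsUnit B.det) :
    (Bᵀ * M * B).PosDef := by
  refine pd_of_quad (herm_of_symm ?_) fun x hx => ?_
  · rw [Matrix.transpose_mul, Matrix.transpose_mul, transpose_transpose, symm_of_herm h.1,
      Matrix.mul_assoc]
  · rw [quad_conj]
    apply quad_pos h
    intro hc
    apply hx
    have := congrArg (B⁻¹ *ᵥ ·) hc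
    simpa [mulVec_mulVec, Matrix.nonsing_inv_mul B hB] using this

lemma psd_conj {M : Matrix ι ι ℝ} (h : M.PosSemidef) (B : Matrix ι ι ℝ) :
    (Bᵀ * M * B).PosSemidef := by
  refine psd_of_quad (herm_of_symm ?_) fun x => ?_
  · rw [Matrix.transpose_mul, Matrix.transpose_mul, transpose_transpose, symm_of_herm h.1,
      Matrix.mul_assoc]
  · rw [quad_conj]; exact quad_nonneg h _

/-- Cauchy–Schwarz for a PSD form -/
lemma psd_cs {M : Matrix ι ι ℝ} (h : M.PosSemidef) (x y : ι → ℝ) :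
    (x ⬝ᵥ M *ᵥ y) ^ 2 ≤ (x ⬝ᵥ M *ᵥ x) * (y ⬝ᵥ M *ᵥ y) := by
  have key : ∀ t : ℝ, 0 ≤ (y ⬝ᵥ M *ᵥ y) * (t * t) + (2 * (x ⬝ᵥ M *ᵥ y)) * t + (x ⬝ᵥ M *ᵥ x) := by
    intro t
    have h0 := quad_nonneg h (x + t • y)
    have expand : (x + t • y) ⬝ᵥ M *ᵥ (x + t • y)
        = (y ⬝ᵥ M *ᵥ y) * (t * t) + (2 * (x ⬝ᵥ M *ᵥ y)) * t + (x ⬝ᵥ M *ᵥ x) := by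
      rw [mulVec_add, dotProduct_add, add_dotProduct, add_dotProduct,
        mulVec_smul, dotProduct_smul, smul_dotProduct, smul_dotProduct,
        dotProduct_smul, quad_dot_comm h.1 y x]
      simp [smul_eq_mul]; ring
    linarith [h0, expand ▸ h0]
  have hd := discrim_le_zero (a := y ⬝ᵥ M *ᵥ y) (b := 2 * (x ⬝ᵥ M *ᵥ y)) (c := x ⬝ᵥ M *ᵥ x) key
  rw [discrim] at hd
  nlinarith [hd]




variable {ι : Type*} [Fintype ι] [DecidableEq ι]

lemma pd_det_isUnit {X : Matrix ι ι ℝ} (hX : X.PosDef) : IsUnit X.det :=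
  isUnit_iff_ne_zero.mpr hX.det_pos.ne'

lemma dot_self_nonneg (x : ι → ℝ) : 0 ≤ x ⬝ᵥ x :=
  Finset.sum_nonneg fun i _ => mul_self_nonneg (x i)

/-- the Loewner order is antitone under inversion -/
lemma inv_antitone {X Y : Matrix ι ι ℝ} (hX : X.PosDef) (hY : Y.PosDef)
    (hXY : (Y - X).PosSemidef) : (X⁻¹ - Y⁻¹).PosSemidef := by
  have hXu : X * X⁻¹ = 1 := Matrix.mul_nonsing_inv X (pd_det_isUnit hX)
  have hYu : Y * Y⁻¹ = 1 := Matrix.mul_nonsing_inv Y (pd_det_isUnit hY)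
  refine psd_of_quad (hX.1.inv.sub hY.1.inv) fun x => ?_
  set u := Y⁻¹ *ᵥ x with hu
  set v := X⁻¹ *ᵥ x with hv
  have hXv : X *ᵥ v = x := by rw [hv, mulVec_mulVec, hXu, one_mulVec]
  have hYu' : Y *ᵥ u = x := by rw [hu, mulVec_mulVec, hYu, one_mulVec]
  set q := x ⬝ᵥ Y⁻¹ *ᵥ x with hq
  set r := x ⬝ᵥ X⁻¹ *ᵥ x with hr
  have a1 : u ⬝ᵥ X *ᵥ v = q := by
    rw [hXv, hq, hu, dotProduct_comm]
  have a2 : u ⬝ᵥ X *ᵥ u ≤ q := by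
    have h0 := quad_nonneg hXY u
    rw [quad_sub] at h0
    have : u ⬝ᵥ Y *ᵥ u = q := by rw [hYu', hq, hu, dotProduct_comm]
    linarith
  have a3 : v ⬝ᵥ X *ᵥ v = r := by rw [hXv, hr, hv, dotProduct_comm]
  have hcs := psd_cs hX.posSemidef u v
  rw [a1, a3] at hcs
  have hq0 : 0 ≤ q := quad_nonneg hY.inv.posSemidef x
  have hXuu : 0 ≤ u ⬝ᵥ X *ᵥ u := quad_nonneg hX.posSemidef u
  rw [quad_sub]
  rw [← hr, ← hq]
  have hr0 : 0 ≤ r := quad_nonneg hX.inv.posSemidef x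
  rcases eq_or_lt_of_le hq0 with h0 | h0
  · linarith
  · nlinarith [hcs, mul_le_mul_of_nonneg_right a2 hr0]

lemma abs_mul_abs_le_dot (x : ι → ℝ) (i j : ι) : |x i| * |x j| ≤ x ⬝ᵥ x := by
  have hi : x i * x i ≤ x ⬝ᵥ x :=
    Finset.single_le_sum (fun k _ => mul_self_nonneg (x k)) (Finset.mem_univ i)
  have hj : x j * x j ≤ x ⬝ᵥ x :=
    Finset.single_le_sum (fun k _ => mul_self_nonneg (x k)) (Finset.mem_univ j)
  nlinarith [abs_nonneg (x i), abs_nonneg (x j), sq_abs (x i), sq_abs (x j)]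

lemma quad_le_const (M : Matrix ι ι ℝ) (x : ι → ℝ) :
    x ⬝ᵥ M *ᵥ x ≤ (∑ i, ∑ j, |M i j|) * (x ⬝ᵥ x) := by
  have expand : x ⬝ᵥ M *ᵥ x = ∑ i, ∑ j, x i * M i j * x j := by
    simp [dotProduct, mulVec, Finset.mul_sum, mul_assoc]
  rw [expand, Finset.sum_mul]
  refine Finset.sum_le_sum fun i _ => ?_
  rw [Finset.sum_mul]
  refine Finset.sum_le_sum fun j _ => ?_
  calc x i * M i j * x j ≤ |x i * M i j * x j| := le_abs_self _
    _ = |M i j| * (|x i| * |x j|) := by rw [abs_mul, abs_mul]; ring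
    _ ≤ |M i j| * (x ⬝ᵥ x) := by
        exact mul_le_mul_of_nonneg_left (abs_mul_abs_le_dot x i j) (abs_nonneg _)

/-- every hermitian matrix is dominated by a positive multiple of the identity -/
lemma le_smul_one {M : Matrix ι ι ℝ} (h : M.IsHermitian) :
    ∃ c : ℝ, 0 < c ∧ ((c • (1 : Matrix ι ι ℝ)) - M).PosSemidef := by
  refine ⟨(∑ i, ∑ j, |M i j|) + 1, by positivity, ?_⟩
  refine psd_of_quad ((herm_smul _ isHermitian_one).sub h) fun x => ?_
  rw [quad_sub, quad_smul, one_mulVec]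
  have := quad_le_const M x
  have := dot_self_nonneg x
  nlinarith

/-- every PD matrix dominates a positive multiple of the identity -/
lemma smul_one_le {D : Matrix ι ι ℝ} (h : D.PosDef) :
    ∃ ε : ℝ, 0 < ε ∧ (D - ε • (1 : Matrix ι ι ℝ)).PosSemidef := by
  obtain ⟨c, hc, hble⟩ := le_smul_one h.1.inv
  have hDu : D * D⁻¹ = 1 := Matrix.mul_nonsing_inv D (pd_det_isUnit h)
  refine ⟨1 / c, by positivity, ?_⟩
  refine psd_of_quad (h.1.sub (herm_smul _ isHermitian_one)) fun x => ?_
  rw [quad_sub, quad_smul, one_mulVec]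
  set y := D⁻¹ *ᵥ x with hy
  have hDy : D *ᵥ y = x := by rw [hy, mulVec_mulVec, hDu, one_mulVec]
  have hcs := psd_cs h.posSemidef x y
  have e1 : x ⬝ᵥ D *ᵥ y = x ⬝ᵥ x := by rw [hDy]
  have e2 : y ⬝ᵥ D *ᵥ y = x ⬝ᵥ D⁻¹ *ᵥ x := by rw [hDy, hy, dotProduct_comm]
  have e3 : x ⬝ᵥ D⁻¹ *ᵥ x ≤ c * (x ⬝ᵥ x) := by
    have h0 := quad_nonneg hble x
    rw [quad_sub, quad_smul, one_mulVec] at h0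
    linarith
  rw [e1, e2] at hcs
  have hdx : 0 ≤ x ⬝ᵥ D *ᵥ x := quad_nonneg h.posSemidef x
  have hs : 0 ≤ x ⬝ᵥ x := dot_self_nonneg x
  rcases eq_or_lt_of_le hs with h0 | h0
  · rw [← h0]; simpa using hdx
  · have hinv : 0 ≤ x ⬝ᵥ D⁻¹ *ᵥ x := quad_nonneg h.inv.posSemidef x
    have : (x ⬝ᵥ x) * (x ⬝ᵥ x) ≤ (x ⬝ᵥ D *ᵥ x) * (c * (x ⬝ᵥ x)) := by
      nlinarith
    rw [sub_nonneg, div_mul_eq_mul_div, one_mul, div_le_iff₀ hc]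
    nlinarith

/-- any hermitian matrix is dominated by a positive multiple of any PD matrix -/
lemma le_smul_pd {D S : Matrix ι ι ℝ} (hD : D.PosDef) (hS : S.IsHermitian) :
    ∃ μ : ℝ, 0 < μ ∧ ((μ • D) - S).PosSemidef := by
  obtain ⟨c, hc, h1⟩ := le_smul_one hS
  obtain ⟨ε, hε, h2⟩ := smul_one_le hD
  refine ⟨c / ε, by positivity, ?_⟩
  have key : (c / ε) • D - S = (c / ε) • (D - ε • (1 : Matrix ι ι ℝ))
      + ((c • (1 : Matrix ι ι ℝ)) - S) := by
    rw [smul_sub, smul_smul, div_mul_cancel₀ _ hε.ne']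
    abel
  rw [key]
  exact (psd_smul h2 (by positivity)).add h1



section Rect
variable {ι κ : Type*} [Fintype ι] [Fintype κ] [DecidableEq ι] [DecidableEq κ]

/-- rectangular congruence at the quadratic-form level -/
lemma quad_rect (B : Matrix κ ι ℝ) (M : Matrix κ κ ℝ) (x : ι → ℝ) :
    x ⬝ᵥ (Bᵀ * M * B) *ᵥ x = (B *ᵥ x) ⬝ᵥ M *ᵥ (B *ᵥ x) := by
  rw [Matrix.mul_assoc, ← mulVec_mulVec, ← mulVec_mulVec,
    dotProduct_mulVec x Bᵀ, vecMul_transpose]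

lemma quad_CtC (B : Matrix κ ι ℝ) (x : ι → ℝ) :
    x ⬝ᵥ (Bᵀ * B) *ᵥ x = (B *ᵥ x) ⬝ᵥ (B *ᵥ x) := by
  rw [← mulVec_mulVec, dotProduct_mulVec x Bᵀ, vecMul_transpose]

end Rect

section SQ
variable {ι : Type*} [Fintype ι] [DecidableEq ι]

lemma psd_sub_trans {X Y Z : Matrix ι ι ℝ} (h1 : (X - Y).PosSemidef)
    (h2 : (Y - Z).PosSemidef) : (X - Z).PosSemidef := by
  have := h1.add h2
  rwa [sub_add_sub_cancel] at this

lemma psd_conj_sub {X Y : Matrix ι ι ℝ} (h : (X - Y).PosSemidef) (B : Matrix ι ι ℝ) :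
    (Bᵀ * X * B - Bᵀ * Y * B).PosSemidef := by
  have := psd_conj h B
  rwa [Matrix.mul_sub, Matrix.sub_mul] at this

lemma psd_smul_sub {X Y : Matrix ι ι ℝ} (h : (X - Y).PosSemidef) {c : ℝ} (hc : 0 ≤ c) :
    (c • X - c • Y).PosSemidef := by
  rw [← smul_sub]; exact psd_smul h hc

lemma psd_sum_sub {α : Type*} (s : Finset α) {f g : α → Matrix ι ι ℝ}
    (h : ∀ a ∈ s, (f a - g a).PosSemidef) :
    ((∑ a ∈ s, f a) - ∑ a ∈ s, g a).PosSemidef := by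
  rw [← Finset.sum_sub_distrib]; exact psd_sum _ _ h

end SQ

section Entry
variable {N' : ℕ}

lemma entry_mul_nonneg {M P : Matrix (Fin N') (Fin N') ℝ} (hM : ∀ i j, 0 ≤ M i j)
    (hP : ∀ i j, 0 ≤ P i j) : ∀ i j, 0 ≤ (M * P) i j := fun i j => by
  rw [Matrix.mul_apply]
  exact Finset.sum_nonneg fun q _ => mul_nonneg (hM i q) (hP q j)

lemma entry_pow_nonneg {M : Matrix (Fin N') (Fin N') ℝ} (hM : ∀ i j, 0 ≤ M i j) :
    ∀ (k : ℕ) (i j : Fin N'), 0 ≤ (M ^ k) i j := by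
  intro k
  induction k with
  | zero => intro i j; by_cases h : i = j <;> simp [Matrix.one_apply, h]
  | succ k ih => rw [pow_succ]; exact entry_mul_nonneg ih hM

/-- every column of an irreducible (or primitive) nonneg matrix has a positive entry -/
lemma col_pos_of_pow_pos {M : Matrix (Fin N') (Fin N') ℝ} (hM : ∀ i j, 0 ≤ M i j)
    {k : ℕ} (hk : 1 ≤ k) {i j : Fin N'} (hpos : 0 < (M ^ k) i j) :
    ∃ q, 0 < M q j := by
  by_contra hcon
  push_neg at hcon
  have hz : ∀ q, M q j = 0 := fun q => le_antisymm (hcon q) (hM q j)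
  obtain ⟨k', rfl⟩ := Nat.exists_eq_add_of_le hk
  rw [add_comm, pow_succ, Matrix.mul_apply] at hpos
  have : ∀ q ∈ Finset.univ, (M ^ k') i q * M q j = 0 := fun q _ => by rw [hz q, mul_zero]
  rw [Finset.sum_congr rfl this] at hpos
  simp at hpos

/-- primitivity spreads to all larger powers -/
lemma pow_pos_of_le {M : Matrix (Fin N') (Fin N') ℝ} (hM : ∀ i j, 0 ≤ M i j)
    {k : ℕ} (hk : 1 ≤ k) (hkpos : ∀ i j, 0 < (M ^ k) i j) :
    ∀ s, k ≤ s → ∀ i j, 0 < (M ^ s) i j := by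
  intro s hs
  induction s with
  | zero => omega
  | succ s ih =>
    rcases Nat.lt_or_ge k (s+1) with h | h
    · have hks : k ≤ s := by omega
      intro i j
      obtain ⟨q, hq⟩ := col_pos_of_pow_pos hM hk (hkpos i j)
      rw [pow_succ, Matrix.mul_apply]
      refine Finset.sum_pos' (fun p _ => mul_nonneg (entry_pow_nonneg hM s i p) (hM p j))
        ⟨q, Finset.mem_univ q, mul_pos (ih hks i q) hq⟩
    · have : k = s + 1 := by omega
      subst this; exact hkpos

end Entry

section Mix
variable {N' n' : ℕ}

lemma mix_lemma (L ν : Matrix (Fin N') (Fin N') ℝ) (G : Fin N' → Matrix (Fin n') (Fin n') ℝ)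
    (s : ℕ) (i : Fin N') :
    ∑ j, L i j • (∑ p, ((L ^ s * ν) j p) • G p) = ∑ p, ((L ^ (s+1) * ν) i p) • G p := by
  calc ∑ j, L i j • (∑ p, ((L ^ s * ν) j p) • G p)
      = ∑ j, ∑ p, (L i j * (L ^ s * ν) j p) • G p := by
        refine Finset.sum_congr rfl fun j _ => ?_
        rw [Finset.smul_sum]
        exact Finset.sum_congr rfl fun p _ => by rw [smul_smul]
    _ = ∑ p, ∑ j, (L i j * (L ^ s * ν) j p) • G p := Finset.sum_comm
    _ = ∑ p, ((L ^ (s+1) * ν) i p) • G p := by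
        refine Finset.sum_congr rfl fun p _ => ?_
        rw [← Finset.sum_smul]
        congr 1
        rw [pow_succ', Matrix.mul_assoc, Matrix.mul_apply]

end Mix
end HCRE


open Matrix Filter HCRE


set_option maxHeartbeats 2000000 in
/-- For an irreducible nonnegative matrix `ν`, the iterates of the
modified iterative law `P_{i,k+1} = A (∑_j l_{ij} P_{j,k}⁻¹ + ν_{ij} C_jᵀ R_j⁻¹ C_j)⁻¹ Aᵀ + Q`
are uniformly bounded above (Loewner order) from some time on, for any positive
definite initial matrices. -/
theorem modified_hcre_iterates_uniformly_bounded
    (n N : ℕ) (hn : 0 < n) (hN : 0 < N)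
    (m : Fin N → ℕ) (hm : ∀ i, 0 < m i)
    (A : Matrix (Fin n) (Fin n) ℝ) (hA : IsUnit A.det)
    (C : ∀ i : Fin N, Matrix (Fin (m i)) (Fin n) ℝ)
    (hObs : (∑ k ∈ Finset.range n, (A ^ k)ᵀ * (∑ i, (C i)ᵀ * C i) * A ^ k).PosDef)
    (Q : Matrix (Fin n) (Fin n) ℝ) (hQ : Q.PosDef)
    (R : ∀ i : Fin N, Matrix (Fin (m i)) (Fin (m i)) ℝ) (hR : ∀ i, (R i).PosDef)
    (L : Matrix (Fin N) (Fin N) ℝ)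
    (hLnonneg : ∀ i j, 0 ≤ L i j) (hLrow : ∀ i, ∑ j, L i j = 1)
    (hLprim : ∃ k : ℕ, 0 < k ∧ ∀ i j, 0 < (L ^ k) i j)
    (ν : Matrix (Fin N) (Fin N) ℝ)
    (hνnonneg : ∀ i j, 0 ≤ ν i j)
    (hνirred : ∀ i j, ∃ k : ℕ, 1 ≤ k ∧ 0 < (ν ^ k) i j)
    (P0 : Fin N → Matrix (Fin n) (Fin n) ℝ) (hP0 : ∀ i, (P0 i).PosDef)
    (Pseq : ℕ → Fin N → Matrix (Fin n) (Fin n) ℝ)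
    (hinit : Pseq 0 = P0)
    (hiter : ∀ k i, Pseq (k + 1) i =
      A * (∑ j, (L i j • (Pseq k j)⁻¹ + ν i j • ((C j)ᵀ * (R j)⁻¹ * C j)))⁻¹ * Aᵀ + Q) :
    ∃ (kbar : ℕ) (P : Matrix (Fin n) (Fin n) ℝ), P.PosDef ∧
      ∀ i : Fin N, ∀ k : ℕ, kbar ≤ k → (P - Pseq k i).PosSemidef := by
  classical
  -- invertibility facts
  have hAT : IsUnit Aᵀ.det := by rwa [Matrix.det_transpose]
  have hAA : A * A⁻¹ = 1 := Matrix.mul_nonsing_inv A hA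
  have hAA' : A⁻¹ * A = 1 := Matrix.nonsing_inv_mul A hA
  have hAT1 : Aᵀ * (A⁻¹)ᵀ = 1 := by rw [← Matrix.transpose_mul, hAA', Matrix.transpose_one]
  -- measurement information matrices
  set G : Fin N → Matrix (Fin n) (Fin n) ℝ := fun j => (C j)ᵀ * (R j)⁻¹ * C j with hGdef
  have hGpsd : ∀ j, (G j).PosSemidef := fun j => by
    have h := Matrix.PosSemidef.conjTranspose_mul_mul_same (hR j).inv.posSemidef (C j)
    rwa [conjTranspose_eq_transpose_of_trivial] at h
  set S : ℕ → Fin N → Matrix (Fin n) (Fin n) ℝ :=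
    fun k i => ∑ j, (L i j • (Pseq k j)⁻¹ + ν i j • G j) with hSdef
  have hiter' : ∀ k i, Pseq (k + 1) i = A * (S k i)⁻¹ * Aᵀ + Q := fun k i => hiter k i
  -- positive definiteness is preserved
  have hconjA : ∀ {M : Matrix (Fin n) (Fin n) ℝ}, M.PosDef → (A * M * Aᵀ).PosDef := by
    intro M hM
    have h := pd_conj hM hAT
    rwa [Matrix.transpose_transpose] at h
  have hconjApsd : ∀ {M : Matrix (Fin n) (Fin n) ℝ}, M.PosSemidef → (A * M * Aᵀ).PosSemidef := by
    intro M hM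
    have h := psd_conj hM Aᵀ
    rwa [Matrix.transpose_transpose] at h
  have hSpd0 : ∀ k, (∀ j, (Pseq k j).PosDef) → ∀ i, (S k i).PosDef := by
    intro k hk i
    obtain ⟨j₀, hj₀⟩ : ∃ j₀, 0 < L i j₀ := by
      by_contra hcon
      push_neg at hcon
      have h0 : ∑ j, L i j = 0 :=
        Finset.sum_eq_zero fun j _ => le_antisymm (hcon j) (hLnonneg i j)
      rw [hLrow i] at h0; norm_num at h0
    exact pd_sum Finset.univ _
      (fun j _ => (psd_smul (hk j).inv.posSemidef (hLnonneg i j)).add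
        (psd_smul (hGpsd j) (hνnonneg i j)))
      (Finset.mem_univ j₀)
      ((pd_smul (hk j₀).inv hj₀).add_posSemidef (psd_smul (hGpsd j₀) (hνnonneg i j₀)))
  have hPD : ∀ k i, (Pseq k i).PosDef := by
    intro k
    induction k with
    | zero => intro i; rw [hinit]; exact hP0 i
    | succ k ih =>
      intro i
      rw [hiter' k i]
      exact Matrix.PosDef.posSemidef_add (hconjApsd (hSpd0 k ih i).inv.posSemidef) hQ
  have hSpd : ∀ k i, (S k i).PosDef := fun k i => hSpd0 k (hPD k) i
  -- uniform lower bound `Q` from step 1 on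
  have hQle : ∀ k i, 1 ≤ k → (Pseq k i - Q).PosSemidef := by
    intro k i hk
    obtain ⟨k', rfl⟩ : ∃ k', k = k' + 1 := ⟨k - 1, by omega⟩
    rw [hiter' k' i, add_sub_cancel_right]
    exact hconjApsd (hSpd k' i).inv.posSemidef
  -- uniform upper bound on the information sums
  set c : ℝ := (∑ i, ∑ j, ν i j) + 1 with hcdef
  have hνsum : (0:ℝ) ≤ ∑ i, ∑ j, ν i j :=
    Finset.sum_nonneg fun i _ => Finset.sum_nonneg fun j _ => hνnonneg i j
  have hc0 : 0 < c := by rw [hcdef]; linarith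
  have hcν : ∀ i j, ν i j ≤ c := by
    intro i j
    have h1 : ν i j ≤ ∑ j', ν i j' :=
      Finset.single_le_sum (fun j' _ => hνnonneg i j') (Finset.mem_univ j)
    have h2 : ∑ j', ν i j' ≤ ∑ i', ∑ j', ν i' j' :=
      Finset.single_le_sum (fun i' _ => Finset.sum_nonneg fun j' _ => hνnonneg i' j')
        (Finset.mem_univ i)
    rw [hcdef]; linarith
  set B : Matrix (Fin n) (Fin n) ℝ := Q⁻¹ + c • ∑ j, G j with hBdef
  have hBpd : B.PosDef :=
    hQ.inv.add_posSemidef (psd_smul (psd_sum _ _ fun j _ => hGpsd j) hc0.le)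
  have hWB : ∀ k i, 1 ≤ k → (B - S k i).PosSemidef := by
    intro k i hk
    have hSki : S k i = ∑ j, (L i j • (Pseq k j)⁻¹ + ν i j • G j) := rfl
    have key : B - S k i = ∑ j, (L i j • (Q⁻¹ - (Pseq k j)⁻¹) + (c - ν i j) • G j) := by
      have e1 : (Q⁻¹ : Matrix (Fin n) (Fin n) ℝ) = ∑ j, L i j • Q⁻¹ := by
        rw [← Finset.sum_smul, hLrow i, one_smul]
      have eB : B = ∑ j, (L i j • Q⁻¹ + c • G j) := by
        rw [hBdef, Finset.sum_add_distrib, ← e1, Finset.smul_sum]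
      calc B - S k i
          = (∑ j, (L i j • Q⁻¹ + c • G j)) - ∑ j, (L i j • (Pseq k j)⁻¹ + ν i j • G j) := by
            rw [hSki, eB]
        _ = ∑ j, ((L i j • Q⁻¹ + c • G j) - (L i j • (Pseq k j)⁻¹ + ν i j • G j)) := by
            rw [← Finset.sum_sub_distrib]
        _ = ∑ j, (L i j • (Q⁻¹ - (Pseq k j)⁻¹) + (c - ν i j) • G j) := by
            refine Finset.sum_congr rfl fun j _ => ?_
            rw [smul_sub, sub_smul]; abel
    rw [key]
    exact psd_sum _ _ fun j _ =>
      (psd_smul (inv_antitone hQ (hPD k j) (hQle k j hk)) (hLnonneg i j)).add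
        (psd_smul (hGpsd j) (sub_nonneg.mpr (hcν i j)))
  -- the contraction constant
  have hDpd : (A * B⁻¹ * Aᵀ).PosDef := hconjA hBpd.inv
  obtain ⟨μ, hμ, hμQ⟩ := le_smul_pd hDpd hQ.1
  set γ : ℝ := (1 + μ)⁻¹ with hγdef
  have h1μ : (0:ℝ) < 1 + μ := by linarith
  have hγ : 0 < γ := inv_pos.mpr h1μ
  -- the one-step information lower bound
  have hstep : ∀ k i, 1 ≤ k →
      ((Pseq (k+1) i)⁻¹ - γ • ((A⁻¹)ᵀ * S k i * A⁻¹)).PosSemidef := by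
    intro k i hk
    have hW : (S k i).PosDef := hSpd k i
    have hWdet : IsUnit (S k i).det := pd_det_isUnit hW
    have hWB' : ((S k i)⁻¹ - B⁻¹).PosSemidef := inv_antitone hW hBpd (hWB k i hk)
    set Ybig := (1 + μ) • (A * (S k i)⁻¹ * Aᵀ) with hYdef
    have hYpd : Ybig.PosDef := pd_smul (hconjA hW.inv) h1μ
    have hub : (Ybig - Pseq (k+1) i).PosSemidef := by
      have e : Ybig - Pseq (k+1) i
          = μ • (A * ((S k i)⁻¹ - B⁻¹) * Aᵀ) + (μ • (A * B⁻¹ * Aᵀ) - Q) := by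
        rw [hYdef, hiter' k i, Matrix.mul_sub, Matrix.sub_mul, add_smul, one_smul, smul_sub]
        abel
      rw [e]
      exact (psd_smul (hconjApsd hWB') hμ.le).add hμQ
    have hYinv : Ybig⁻¹ = γ • ((A⁻¹)ᵀ * S k i * A⁻¹) := by
      apply Matrix.inv_eq_right_inv
      rw [hYdef, smul_mul_assoc, mul_smul_comm, smul_smul, mul_inv_cancel₀ h1μ.ne']
      have e1 : (A * (S k i)⁻¹ * Aᵀ) * ((A⁻¹)ᵀ * S k i * A⁻¹)
          = A * ((S k i)⁻¹ * ((Aᵀ * (A⁻¹)ᵀ) * (S k i * A⁻¹))) := by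
        simp only [Matrix.mul_assoc]
      rw [e1, hAT1, Matrix.one_mul, ← Matrix.mul_assoc (S k i)⁻¹,
        Matrix.nonsing_inv_mul _ hWdet, Matrix.one_mul, hAA, one_smul]
    have h := inv_antitone (hPD (k+1) i) hYpd hub
    rwa [hYinv] at h
  -- the auxiliary lower-bound recursion
  set F : ℕ → Fin N → Matrix (Fin n) (Fin n) ℝ :=
    fun t => Nat.rec (motive := fun _ => Fin N → Matrix (Fin n) (Fin n) ℝ)
      (fun _ => 0)
      (fun _ Ft i => γ • ((A⁻¹)ᵀ * ((∑ j, L i j • Ft j) + ∑ j, ν i j • G j) * A⁻¹)) t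
    with hFdef
  have hF0 : ∀ i, F 0 i = 0 := fun _ => rfl
  have hFsucc : ∀ t i, F (t+1) i
      = γ • ((A⁻¹)ᵀ * ((∑ j, L i j • F t j) + ∑ j, ν i j • G j) * A⁻¹) := fun _ _ => rfl
  have hFpsd : ∀ t i, (F t i).PosSemidef := by
    intro t
    induction t with
    | zero => intro i; rw [hF0]; exact Matrix.PosSemidef.zero
    | succ t ih =>
      intro i
      rw [hFsucc]
      exact psd_smul (psd_conj ((psd_sum _ _ fun j _ => psd_smul (ih j) (hLnonneg i j)).add
        (psd_sum _ _ fun j _ => psd_smul (hGpsd j) (hνnonneg i j))) A⁻¹) hγ.le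
  -- the iterates dominate the recursion
  have claimD : ∀ t k, 1 ≤ k → ∀ i, ((Pseq (k+t) i)⁻¹ - F t i).PosSemidef := by
    intro t
    induction t with
    | zero => intro k hk i; rw [hF0, sub_zero]; exact (hPD k i).inv.posSemidef
    | succ t ih =>
      intro k hk i
      have hkt : 1 ≤ k + t := by omega
      have h1 := hstep (k+t) i hkt
      have h2 : (γ • ((A⁻¹)ᵀ * S (k+t) i * A⁻¹) - F (t+1) i).PosSemidef := by
        have hSsplit : S (k+t) i
            = (∑ j, L i j • (Pseq (k+t) j)⁻¹) + ∑ j, ν i j • G j := Finset.sum_add_distrib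
        rw [hFsucc, hSsplit, ← smul_sub, ← Matrix.sub_mul, ← Matrix.mul_sub,
          add_sub_add_right_eq_sub, ← Finset.sum_sub_distrib]
        refine psd_smul (psd_conj (psd_sum _ _ fun j _ => ?_) A⁻¹) hγ.le
        rw [← smul_sub]
        exact psd_smul (ih k hk j) (hLnonneg i j)
      exact psd_sub_trans h1 h2
  -- the recursion dominates mixed Gramian terms
  set Mb : ℕ → Fin N → Matrix (Fin n) (Fin n) ℝ :=
    fun s i => ∑ j, ((L ^ s * ν) i j) • G j with hMbdef
  set T : ℕ → Fin N → Matrix (Fin n) (Fin n) ℝ :=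
    fun s i => γ ^ (s+1) • ((A⁻¹ ^ (s+1))ᵀ * Mb s i * A⁻¹ ^ (s+1)) with hTdef
  have hTeq : ∀ s i, T s i = γ ^ (s+1) • ((A⁻¹ ^ (s+1))ᵀ * Mb s i * A⁻¹ ^ (s+1)) :=
    fun _ _ => rfl
  have claimG : ∀ t s, s < t → ∀ i, (F t i - T s i).PosSemidef := by
    intro t
    induction t with
    | zero => intro s hs; omega
    | succ t ih =>
      intro s hs i
      match s with
      | 0 =>
        have hMb0 : Mb 0 i = ∑ j, ν i j • G j := by
          have hL0 : L ^ 0 * ν = ν := by rw [pow_zero, Matrix.one_mul]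
          show (∑ j, ((L ^ 0 * ν) i j) • G j) = ∑ j, ν i j • G j
          rw [hL0]
        have hT0 : T 0 i = γ • ((A⁻¹)ᵀ * Mb 0 i * A⁻¹) := by
          rw [hTeq, pow_one, pow_one]
        rw [hFsucc, hT0, hMb0, ← smul_sub, ← Matrix.sub_mul, ← Matrix.mul_sub,
          add_sub_cancel_right]
        exact psd_smul (psd_conj (psd_sum _ _ fun j _ =>
          psd_smul (hFpsd t j) (hLnonneg i j)) A⁻¹) hγ.le
      | s + 1 =>
        have hst : s < t := by omega
        have m1 : ((∑ j, L i j • F t j) - ∑ j, L i j • T s j).PosSemidef :=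
          psd_sum_sub _ fun j _ => by
            rw [← smul_sub]; exact psd_smul (ih s hst j) (hLnonneg i j)
        have m2 : (F (t+1) i
            - γ • ((A⁻¹)ᵀ * ((∑ j, L i j • T s j) + ∑ j, ν i j • G j) * A⁻¹)).PosSemidef := by
          rw [hFsucc, ← smul_sub, ← Matrix.sub_mul, ← Matrix.mul_sub, add_sub_add_right_eq_sub]
          exact psd_smul (psd_conj m1 A⁻¹) hγ.le
        have m3 : ((γ • ((A⁻¹)ᵀ * ((∑ j, L i j • T s j) + ∑ j, ν i j • G j) * A⁻¹))
            - γ • ((A⁻¹)ᵀ * (∑ j, L i j • T s j) * A⁻¹)).PosSemidef := by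
          rw [← smul_sub, ← Matrix.sub_mul, ← Matrix.mul_sub, add_sub_cancel_left]
          exact psd_smul (psd_conj (psd_sum _ _ fun j _ =>
            psd_smul (hGpsd j) (hνnonneg i j)) A⁻¹) hγ.le
        have hmix : ∑ j, L i j • Mb s j = Mb (s+1) i := mix_lemma L ν G s i
        have e1 : ∑ j, L i j • T s j
            = γ ^ (s+1) • ((A⁻¹ ^ (s+1))ᵀ * Mb (s+1) i * A⁻¹ ^ (s+1)) := by
          rw [← hmix]
          calc ∑ j, L i j • T s j
              = ∑ j, L i j • (γ ^ (s+1) • ((A⁻¹ ^ (s+1))ᵀ * Mb s j * A⁻¹ ^ (s+1))) := by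
                exact Finset.sum_congr rfl fun j _ => by rw [hTeq]
            _ = ∑ j, γ ^ (s+1) • (L i j • ((A⁻¹ ^ (s+1))ᵀ * Mb s j * A⁻¹ ^ (s+1))) := by
                exact Finset.sum_congr rfl fun j _ => smul_comm _ _ _
            _ = γ ^ (s+1) • ∑ j, L i j • ((A⁻¹ ^ (s+1))ᵀ * Mb s j * A⁻¹ ^ (s+1)) := by
                rw [Finset.smul_sum]
            _ = γ ^ (s+1) • ((A⁻¹ ^ (s+1))ᵀ * (∑ j, L i j • Mb s j) * A⁻¹ ^ (s+1)) := by
                congr 1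
                rw [Matrix.mul_sum, Matrix.sum_mul]
                exact Finset.sum_congr rfl fun j _ => by rw [mul_smul_comm, smul_mul_assoc]
        have key : γ • ((A⁻¹)ᵀ * (∑ j, L i j • T s j) * A⁻¹) = T (s+1) i := by
          rw [e1, mul_smul_comm, smul_mul_assoc, smul_smul, hTeq]
          have hγp : γ * γ ^ (s+1) = γ ^ (s+1+1) := (pow_succ' γ (s+1)).symm
          rw [hγp]
          congr 1
          calc (A⁻¹)ᵀ * ((A⁻¹ ^ (s+1))ᵀ * Mb (s+1) i * A⁻¹ ^ (s+1)) * A⁻¹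
              = ((A⁻¹)ᵀ * (A⁻¹ ^ (s+1))ᵀ) * (Mb (s+1) i * (A⁻¹ ^ (s+1) * A⁻¹)) := by
                simp only [Matrix.mul_assoc]
            _ = (A⁻¹ ^ (s+1+1))ᵀ * Mb (s+1) i * A⁻¹ ^ (s+1+1) := by
                rw [← Matrix.transpose_mul, ← pow_succ, Matrix.mul_assoc]
        have h := psd_sub_trans m2 m3
        rwa [key] at h
  -- positivity of the accumulated Gramian terms
  obtain ⟨K, hK1, hKpos⟩ := hLprim
  have hLpow : ∀ s, K ≤ s → ∀ i j, 0 < (L ^ s) i j := pow_pos_of_le hLnonneg hK1 hKpos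
  have hνcol : ∀ j, ∃ p, 0 < ν p j := fun j => by
    obtain ⟨k, hk1, hkpos⟩ := hνirred j j
    exact col_pos_of_pow_pos hνnonneg hk1 hkpos
  have hLν : ∀ s, K ≤ s → ∀ i j, 0 < (L ^ s * ν) i j := by
    intro s hs i j
    obtain ⟨p, hp⟩ := hνcol j
    rw [Matrix.mul_apply]
    exact Finset.sum_pos'
      (fun q _ => mul_nonneg (entry_pow_nonneg hLnonneg s i q) (hνnonneg q j))
      ⟨p, Finset.mem_univ p, mul_pos (hLpow s hs i p) hp⟩
  have hMbeq : ∀ s i, Mb s i = ∑ j', ((L ^ s * ν) i j') • G j' := fun _ _ => rfl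
  -- positive definiteness of the accumulated bound
  have hFpd : ∀ i, (F (K + n) i).PosDef := by
    intro i
    refine pd_of_quad (hFpsd (K+n) i).1 fun x hx => ?_
    have hAKn : IsUnit ((A ^ (K+n)).det) := by
      rw [Matrix.det_pow]; exact hA.pow _
    set y : Fin n → ℝ := (A⁻¹ ^ (K+n)) *ᵥ x with hydef
    have hxy : (A ^ (K+n)) *ᵥ y = x := by
      rw [hydef, mulVec_mulVec, Matrix.inv_pow', Matrix.mul_nonsing_inv _ hAKn, one_mulVec]
    have hy : y ≠ 0 := by
      intro h0
      apply hx
      rw [← hxy, h0, mulVec_zero]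
    have hg := quad_pos hObs hy
    rw [quad_sum] at hg
    obtain ⟨r, hr, hrpos⟩ : ∃ r ∈ Finset.range n,
        0 < y ⬝ᵥ ((A ^ r)ᵀ * (∑ i', (C i')ᵀ * C i') * A ^ r) *ᵥ y := by
      by_contra hcon
      push_neg at hcon
      have hle : ∑ r ∈ Finset.range n,
          y ⬝ᵥ ((A ^ r)ᵀ * (∑ i', (C i')ᵀ * C i') * A ^ r) *ᵥ y ≤ 0 :=
        Finset.sum_nonpos fun r hr => hcon r hr
      linarith
    rw [quad_rect] at hrpos
    set w0 := (A ^ r) *ᵥ y with hw0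
    rw [quad_sum] at hrpos
    obtain ⟨j, _, hjpos⟩ : ∃ j ∈ Finset.univ, 0 < w0 ⬝ᵥ ((C j)ᵀ * C j) *ᵥ w0 := by
      by_contra hcon
      push_neg at hcon
      have hle : ∑ j, w0 ⬝ᵥ ((C j)ᵀ * C j) *ᵥ w0 ≤ 0 :=
        Finset.sum_nonpos fun j hj => hcon j hj
      linarith
    rw [quad_CtC] at hjpos
    have hCw : C j *ᵥ w0 ≠ 0 := by
      intro h0; rw [h0] at hjpos; simp at hjpos
    have hrn : r < n := Finset.mem_range.mp hr
    set s := K + n - 1 - r with hsdef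
    have hsK : K ≤ s := by omega
    have hslt : s < K + n := by omega
    have hrunit : IsUnit ((A ^ r).det) := by rw [Matrix.det_pow]; exact hA.pow r
    have hpow : A ^ r * A⁻¹ ^ (K+n) = A⁻¹ ^ (s+1) := by
      have hsplit : A⁻¹ ^ (K + n) = A⁻¹ ^ r * A⁻¹ ^ (s+1) := by
        rw [← pow_add]
        congr 1
        omega
      rw [hsplit, ← Matrix.mul_assoc, Matrix.inv_pow', Matrix.mul_nonsing_inv _ hrunit,
        Matrix.one_mul]
    have hw : A⁻¹ ^ (s+1) *ᵥ x = w0 := by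
      rw [hw0, hydef, mulVec_mulVec, hpow]
    have hFT := claimG (K+n) s hslt i
    have hq1 : x ⬝ᵥ T s i *ᵥ x ≤ x ⬝ᵥ F (K+n) i *ᵥ x := by
      have h0 := quad_nonneg hFT x
      rw [quad_sub] at h0
      linarith
    have hq2 : x ⬝ᵥ T s i *ᵥ x = γ ^ (s+1) * (w0 ⬝ᵥ Mb s i *ᵥ w0) := by
      rw [hTeq, quad_smul, quad_rect, hw]
    have hq3 : w0 ⬝ᵥ Mb s i *ᵥ w0 = ∑ j', ((L ^ s * ν) i j') * (w0 ⬝ᵥ G j' *ᵥ w0) := by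
      rw [hMbeq, quad_sum]
      exact Finset.sum_congr rfl fun j' _ => quad_smul _ _ _
    have hGj : w0 ⬝ᵥ G j *ᵥ w0 = (C j *ᵥ w0) ⬝ᵥ (R j)⁻¹ *ᵥ (C j *ᵥ w0) := by
      have hGjdef : G j = (C j)ᵀ * (R j)⁻¹ * C j := rfl
      rw [hGjdef, quad_rect]
    have hpos : 0 < ∑ j', ((L ^ s * ν) i j') * (w0 ⬝ᵥ G j' *ᵥ w0) := by
      refine Finset.sum_pos'
        (fun j' _ => mul_nonneg (hLν s hsK i j').le (quad_nonneg (hGpsd j') w0))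
        ⟨j, Finset.mem_univ j, ?_⟩
      refine mul_pos (hLν s hsK i j) ?_
      rw [hGj]
      exact quad_pos (hR j).inv hCw
    calc (0:ℝ) < γ ^ (s+1) * (w0 ⬝ᵥ Mb s i *ᵥ w0) := by
          rw [hq3]; exact mul_pos (pow_pos hγ _) hpos
      _ = x ⬝ᵥ T s i *ᵥ x := hq2.symm
      _ ≤ _ := hq1
  -- final assembly
  refine ⟨K + n + 1, 1 + ∑ i', (F (K+n) i')⁻¹,
    Matrix.PosDef.add_posSemidef Matrix.PosDef.one
      (psd_sum _ _ fun i' _ => (hFpd i').inv.posSemidef), ?_⟩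
  intro i k hk
  have hk1 : 1 ≤ k - (K+n) := by omega
  have hD := claimD (K+n) (k - (K+n)) hk1 i
  rw [show k - (K+n) + (K+n) = k from by omega] at hD
  have h2 : ((F (K+n) i)⁻¹ - Pseq k i).PosSemidef := by
    have h := inv_antitone (hFpd i) (hPD k i).inv hD
    rwa [Matrix.nonsing_inv_nonsing_inv _ (pd_det_isUnit (hPD k i))] at h
  have h3 : ((1 + ∑ i', (F (K+n) i')⁻¹) - (F (K+n) i)⁻¹).PosSemidef := by
    have e : (1 + ∑ i', (F (K+n) i')⁻¹) - (F (K+n) i)⁻¹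
        = 1 + (∑ i' ∈ Finset.univ.erase i, (F (K+n) i')⁻¹) := by
      rw [← Finset.add_sum_erase _ _ (Finset.mem_univ i)]
      abel
    rw [e]
    exact Matrix.PosSemidef.one.add (psd_sum _ _ fun j _ => (hFpd j).inv.posSemidef)
  exact psd_sub_trans h3 h2
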